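/- Let r, R > 0 with 2r ≤ R. Let ω be an (r,R)-set in ℝ^d and S > 0 be arbitrary. Then there exists a crystallographic (r,R)-set ρ in ℝ^d with ρ ∩ Q(S) = ω ∩ Q(S), where Q(S) = [−S,S]^d. -/

import Mathlib

open scoped Pointwise

/-- `ω ⊆ ℝ^d` is an `(r,R)`-set: the open balls of radius `r` around distinct points of `ω`
are disjoint, and the closed balls of radius `R` around the points of `ω` cover `ℝ^d`. -/
def IsRRSet {d : ℕ} (r R : ℝ) (ω : Set (EuclideanSpace ℝ (Fin d))) : Prop :=
  (∀ x ∈ ω, ∀ y ∈ ω, x ≠ y → Disjoint (Metric.ball x r) (Metric.ball y r)) ∧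
  (⋃ x ∈ ω, Metric.closedBall x R) = Set.univ

/-- A Delone set: an `(r,R)`-set for some `0 < r ≤ R`. -/
def IsDelone {d : ℕ} (ω : Set (EuclideanSpace ℝ (Fin d))) : Prop :=
  ∃ r R : ℝ, 0 < r ∧ r ≤ R ∧ IsRRSet r R ω

/-- A Delone set `ρ` is crystallographic if its period group
`Per(ρ) = {t : t + ρ = ρ}` is a lattice, i.e. a discrete cocompact subgroup of `ℝ^d`. -/
def IsCrystallographic {d : ℕ} (ρ : Set (EuclideanSpace ℝ (Fin d))) : Prop :=
  ∃ L : AddSubgroup (EuclideanSpace ℝ (Fin d)),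
    (L : Set (EuclideanSpace ℝ (Fin d))) = {t | t +ᵥ ρ = ρ} ∧
    DiscreteTopology L ∧ CompactSpace (EuclideanSpace ℝ (Fin d) ⧸ L)

/-- The cube `Q(S) = [-S, S]^d` in `ℝ^d`. -/
def cube (d : ℕ) (S : ℝ) : Set (EuclideanSpace ℝ (Fin d)) :=
  {x | ∀ i, x i ∈ Set.Icc (-S) S}

namespace CrystExt

variable {d : ℕ}

lemma coord_le_dist (x y : EuclideanSpace ℝ (Fin d)) (i : Fin d) :
    |x i - y i| ≤ dist x y := by
  rw [EuclideanSpace.dist_eq]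
  have h2 := Real.sqrt_le_sqrt
    (Finset.single_le_sum (f := fun j => dist (x j) (y j) ^ 2)
      (fun j _ => sq_nonneg _) (Finset.mem_univ i))
  rwa [Real.sqrt_sq dist_nonneg, Real.dist_eq] at h2

lemma cube_mono {S S' : ℝ} (h : S ≤ S') : cube d S ⊆ cube d S' := by
  intro x hx i
  obtain ⟨h1, h2⟩ := hx i
  exact ⟨le_trans (neg_le_neg h) h1, le_trans h2 h⟩

/-- The lattice `(2T·ℤ)^d`. -/
noncomputable def latt (d : ℕ) (T : ℝ) : AddSubgroup (EuclideanSpace ℝ (Fin d)) where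
  carrier := {x | ∀ i, ∃ k : ℤ, x i = 2 * T * k}
  zero_mem' := fun i => ⟨0, by simp⟩
  add_mem' := by
    rintro a b ha hb i
    obtain ⟨k, hk⟩ := ha i
    obtain ⟨m, hm⟩ := hb i
    refine ⟨k + m, ?_⟩
    show a i + b i = 2 * T * (↑(k + m) : ℝ)
    push_cast
    rw [hk, hm]; ring
  neg_mem' := by
    rintro a ha i
    obtain ⟨k, hk⟩ := ha i
    refine ⟨-k, ?_⟩
    show -(a i) = 2 * T * (↑(-k) : ℝ)
    push_cast
    rw [hk]; ring

lemma latt_norm {T : ℝ} (hT : 0 < T) {l : EuclideanSpace ℝ (Fin d)}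
    (hl : l ∈ latt d T) (h0 : l ≠ 0) : 2 * T ≤ ‖l‖ := by
  have : ∃ i, l i ≠ 0 := by
    by_contra h
    push_neg at h
    exact h0 (PiLp.ext h)
  obtain ⟨i, hi⟩ := this
  obtain ⟨k, hk⟩ := hl i
  have hk0 : k ≠ 0 := by rintro rfl; simp at hk; exact hi hk
  have h1 : 2 * T ≤ |l i| := by
    rw [hk, abs_mul, abs_of_pos (by linarith : (0:ℝ) < 2 * T)]
    have : (1 : ℝ) ≤ |(k:ℝ)| := by
      rw [← Int.cast_abs]
      exact_mod_cast Int.one_le_abs hk0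
    nlinarith
  calc 2 * T ≤ |l i - (0 : EuclideanSpace ℝ (Fin d)) i| := by simpa using h1
    _ ≤ dist l 0 := coord_le_dist l 0 i
    _ = ‖l‖ := by rw [dist_zero_right]

/-- Periodization of a set by the lattice. -/
def per (d : ℕ) (T : ℝ) (σ : Set (EuclideanSpace ℝ (Fin d))) :
    Set (EuclideanSpace ℝ (Fin d)) :=
  {z | ∃ x ∈ σ, ∃ l ∈ latt d T, z = x + l}

lemma mem_per {T : ℝ} {σ : Set (EuclideanSpace ℝ (Fin d))} {x : EuclideanSpace ℝ (Fin d)}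
    (hx : x ∈ σ) : x ∈ per d T σ :=
  ⟨x, hx, 0, (latt d T).zero_mem, (add_zero x).symm⟩

lemma per_add {T : ℝ} {σ : Set (EuclideanSpace ℝ (Fin d))} {z l : EuclideanSpace ℝ (Fin d)}
    (hz : z ∈ per d T σ) (hl : l ∈ latt d T) : z + l ∈ per d T σ := by
  obtain ⟨x, hx, m, hm, rfl⟩ := hz
  exact ⟨x, hx, m + l, (latt d T).add_mem hm hl, add_assoc x m l⟩

/-- Separation condition on the periodization. -/
def Sep (d : ℕ) (T r : ℝ) (σ : Set (EuclideanSpace ℝ (Fin d))) : Prop :=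
  ∀ a ∈ per d T σ, ∀ b ∈ per d T σ, a ≠ b → 2 * r ≤ dist a b

end CrystExt

open CrystExt in
/-- Any `(r,R)`-set (with `2r ≤ R`) can be extended outside a given cube to a
crystallographic `(r,R)`-set. -/
theorem crystallographic_extension {d : ℕ} (r R : ℝ) (hr : 0 < r) (hR : 0 < R)
    (hrR : 2 * r ≤ R) (ω : Set (EuclideanSpace ℝ (Fin d))) (hω : IsRRSet r R ω)
    (S : ℝ) (hS : 0 < S) :
    ∃ ρ : Set (EuclideanSpace ℝ (Fin d)), IsRRSet r R ρ ∧ IsCrystallographic ρ ∧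
      ρ ∩ cube d S = ω ∩ cube d S := by
  classical
  set T : ℝ := S + R + r with hTdef
  have hT : 0 < T := by positivity
  have hrT : r ≤ T := by simp only [hTdef]; linarith
  have hST : S < T := by simp only [hTdef]; linarith
  have hSRT : S + R ≤ T := by simp only [hTdef]; linarith
  -- separation of ω
  have hωsep : ∀ x ∈ ω, ∀ y ∈ ω, x ≠ y → 2 * r ≤ dist x y := by
    intro x hx y hy hxy
    have := (disjoint_ball_ball_iff hr hr).mp (hω.1 x hx y hy hxy)
    linarith
  -- covering by ω
  have hωcov : ∀ z : EuclideanSpace ℝ (Fin d), ∃ x ∈ ω, dist z x ≤ R := by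
    intro z
    have : z ∈ ⋃ x ∈ ω, Metric.closedBall x R := hω.2 ▸ Set.mem_univ z
    simpa only [Set.mem_iUnion, Metric.mem_closedBall, exists_prop] using this
  -- the family for Zorn's lemma
  set Fam : Set (Set (EuclideanSpace ℝ (Fin d))) :=
    {σ | ω ∩ cube d (S + R) ⊆ σ ∧
      σ ⊆ (ω ∩ cube d (S + R)) ∪ (cube d T \ cube d S) ∧ Sep d T r σ} with hFam
  -- the base set is in the family
  have hbase : (ω ∩ cube d (S + R)) ∈ Fam := by
    refine ⟨Set.Subset.rfl, Set.subset_union_left, ?_⟩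
    rintro a ⟨x, ⟨hxω, hxc⟩, l, hl, rfl⟩ b ⟨y, ⟨hyω, hyc⟩, l', hl', rfl⟩ hab
    by_cases hll : l = l'
    · subst hll
      have hxy : x ≠ y := fun h => hab (by rw [h])
      calc 2 * r ≤ dist x y := hωsep x hxω y hyω hxy
        _ = dist (x + l) (y + l) := (dist_add_right x y l).symm
    · -- different lattice translates of points deep inside the cube
      obtain ⟨i, hi⟩ : ∃ i, l i ≠ l' i := by
        by_contra h; push_neg at h; exact hll (PiLp.ext h)
      obtain ⟨k, hk⟩ := hl i
      obtain ⟨k', hk'⟩ := hl' i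
      have hkk : k ≠ k' := by
        intro h; apply hi; rw [hk, hk', h]
      have h1 : 2 * T ≤ |l i - l' i| := by
        rw [hk, hk', ← mul_sub, abs_mul, abs_of_pos (by linarith : (0:ℝ) < 2 * T),
          ← Int.cast_sub, ← Int.cast_abs]
        have : (1 : ℤ) ≤ |k - k'| := Int.one_le_abs (sub_ne_zero.mpr hkk)
        have : (1 : ℝ) ≤ (|k - k'| : ℤ) := by exact_mod_cast this
        nlinarith
      have hxi := hxc i
      have hyi := hyc i
      have hcoord : 2 * r ≤ |(x + l) i - (y + l') i| := by
        have : (x + l) i - (y + l') i = (l i - l' i) + (x i - y i) := by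
          show x i + l i - (y i + l' i) = _; ring
        rw [this]
        have habs : |x i - y i| ≤ 2 * (S + R) := by
          rw [abs_le]
          simp only [Set.mem_Icc] at hxi hyi
          constructor <;> linarith [hxi.1, hxi.2, hyi.1, hyi.2]
        have := abs_sub_abs_le_abs_sub (l i - l' i) (-(x i - y i))
        rw [sub_neg_eq_add, abs_neg] at this
        have hTge : 2 * T ≥ 2 * (S + R) + 2 * r := by simp only [hTdef]; linarith
        linarith
      exact le_trans hcoord (coord_le_dist _ _ i)
  -- Zorn's lemma
  have hZorn : ∀ c ⊆ Fam, IsChain (· ⊆ ·) c → c.Nonempty →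
      ∃ ub ∈ Fam, ∀ s ∈ c, s ⊆ ub := by
    intro c hcF hchain hcne
    refine ⟨⋃₀ c, ⟨?_, ?_, ?_⟩, fun s hs => Set.subset_sUnion_of_mem hs⟩
    · obtain ⟨s, hs⟩ := hcne
      exact le_trans (hcF hs).1 (Set.subset_sUnion_of_mem hs)
    · intro x hx
      obtain ⟨s, hs, hxs⟩ := hx
      exact (hcF hs).2.1 hxs
    · rintro a ⟨x, hx, l, hl, rfl⟩ b ⟨y, hy, l', hl', rfl⟩ hab
      obtain ⟨s₁, hs₁, hxs⟩ := hx
      obtain ⟨s₂, hs₂, hys⟩ := hy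
      rcases hchain.total hs₁ hs₂ with h | h
      · exact (hcF hs₂).2.2 _ ⟨x, h hxs, l, hl, rfl⟩ _ ⟨y, hys, l', hl', rfl⟩ hab
      · exact (hcF hs₁).2.2 _ ⟨x, hxs, l, hl, rfl⟩ _ ⟨y, h hys, l', hl', rfl⟩ hab
  obtain ⟨m, hbm, hmax⟩ := zorn_subset_nonempty Fam hZorn _ hbase
  obtain ⟨hmF1, hmF2, hmSep⟩ := hmax.1
  set ρ : Set (EuclideanSpace ℝ (Fin d)) := per d T m with hρdef
  have hmρ : m ⊆ ρ := fun x hx => mem_per hx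
  have hmT : m ⊆ cube d T := by
    intro x hx
    rcases hmF2 hx with h | h
    · exact cube_mono hSRT h.2
    · exact h.1
  -- covering of the fundamental cube
  have hcovT : ∀ p ∈ cube d T, ∃ q ∈ ρ, dist p q ≤ R := by
    intro p hp
    by_cases hpS : p ∈ cube d S
    · obtain ⟨x, hxω, hpx⟩ := hωcov p
      refine ⟨x, hmρ (hmF1 ⟨hxω, ?_⟩), hpx⟩
      intro i
      have h1 := coord_le_dist x p i
      have h2 := hp i  -- not needed, use hpS
      have h3 := hpS i
      simp only [Set.mem_Icc] at h3 ⊢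
      rw [dist_comm] at hpx
      have := abs_le.mp (le_trans h1 hpx)
      exact ⟨by linarith [this.1, h3.1], by linarith [this.2, h3.2]⟩
    · by_contra hcon
      push_neg at hcon
      have hpm : p ∉ m := by
        intro hpm
        have := hcon p (hmρ hpm)
        simp only [dist_self] at this
        linarith
      have hins : insert p m ∈ Fam := by
        refine ⟨le_trans hmF1 (Set.subset_insert p m), ?_, ?_⟩
        · rw [Set.insert_subset_iff]
          exact ⟨Or.inr ⟨hp, hpS⟩, hmF2⟩
        · rintro a ⟨x, hx, l, hl, rfl⟩ b ⟨y, hy, l', hl', rfl⟩ hab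
          have key : ∀ w : EuclideanSpace ℝ (Fin d), w ∈ m → ∀ l₁ ∈ latt d T,
              ∀ l₂ ∈ latt d T, 2 * r ≤ dist (p + l₁) (w + l₂) := by
            intro w hw l₁ hl₁ l₂ hl₂
            have hw' : w + (l₂ - l₁) ∈ ρ := per_add (hmρ hw) ((latt d T).sub_mem hl₂ hl₁)
            have hRlt := hcon _ hw'
            have hd : dist (p + l₁) (w + l₂) = dist p (w + (l₂ - l₁)) := by
              rw [dist_eq_norm, dist_eq_norm]; congr 1; abel
            rw [hd]; linarith
          rcases Set.mem_insert_iff.mp hx with hxp | hxm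
          · rcases Set.mem_insert_iff.mp hy with hyp | hym
            · have hll : l ≠ l' := by
                intro h; apply hab; rw [hxp, hyp, h]
              have h2 : 2 * T ≤ ‖l - l'‖ := latt_norm hT ((latt d T).sub_mem hl hl')
                (sub_ne_zero.mpr hll)
              have hd : dist (x + l) (y + l') = ‖l - l'‖ := by
                rw [hxp, hyp, dist_eq_norm]; congr 1; abel
              rw [hd]; linarith
            · rw [hxp]; exact key y hym l hl l' hl'
          · rcases Set.mem_insert_iff.mp hy with hyp | hym
            · rw [hyp, dist_comm]
              exact key x hxm l' hl' l hl
            · exact hmSep _ ⟨x, hxm, l, hl, rfl⟩ _ ⟨y, hym, l', hl', rfl⟩ hab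
      have := hmax.2 hins (Set.subset_insert p m)
      exact hpm (this (Set.mem_insert p m))
  -- reduction of any point into the fundamental cube
  have hdecomp : ∀ z : EuclideanSpace ℝ (Fin d),
      ∃ l ∈ latt d T, z - l ∈ cube d T := by
    intro z
    set lv : EuclideanSpace ℝ (Fin d) :=
      (WithLp.toLp 2 (fun i => 2 * T * ⌊(z i + T) / (2 * T)⌋ : Fin d → ℝ) : EuclideanSpace ℝ (Fin d))
      with hlv
    refine ⟨lv, fun i => ⟨⌊(z i + T) / (2 * T)⌋, rfl⟩, ?_⟩
    intro i
    have h2T : (0:ℝ) < 2 * T := by linarith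
    set u := (z i + T) / (2 * T) with hu
    have h1 : (⌊u⌋ : ℝ) ≤ u := Int.floor_le u
    have h2 : u < ⌊u⌋ + 1 := Int.lt_floor_add_one u
    have h1' : 2 * T * ⌊u⌋ ≤ z i + T := by
      rw [hu] at h1
      calc 2 * T * ⌊u⌋ ≤ 2 * T * ((z i + T) / (2 * T)) := by nlinarith
        _ = z i + T := by field_simp
    have h2' : z i + T < 2 * T * ⌊u⌋ + 2 * T := by
      have : (z i + T) = 2 * T * u := by rw [hu]; field_simp
      nlinarith
    have hzi : (z - lv) i = z i - 2 * T * ⌊u⌋ := rfl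
    rw [hzi]
    exact ⟨by linarith, by linarith⟩
  -- ρ is closed under adding lattice vectors and subtracting them
  have hρvadd : ∀ l ∈ latt d T, l +ᵥ ρ = ρ := by
    intro l hl
    ext z
    constructor
    · rintro ⟨y, hy, rfl⟩
      show l + y ∈ ρ
      have := per_add hy hl
      rwa [add_comm] at this
    · intro hz
      have h1 : z + -l ∈ ρ := per_add hz ((latt d T).neg_mem hl)
      refine ⟨z + -l, h1, ?_⟩
      show l + (z + -l) = z
      abel
  -- total covering
  have hcov : ∀ z : EuclideanSpace ℝ (Fin d), ∃ q ∈ ρ, dist z q ≤ R := by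
    intro z
    obtain ⟨l, hl, hzl⟩ := hdecomp z
    obtain ⟨q, hq, hdq⟩ := hcovT _ hzl
    refine ⟨q + l, per_add hq hl, ?_⟩
    calc dist z (q + l) = dist (z - l) q := by
          rw [dist_eq_norm, dist_eq_norm]; congr 1; abel
      _ ≤ R := hdq
  -- ρ is an (r,R)-set
  have hρRR : IsRRSet r R ρ := by
    constructor
    · intro x hx y hy hxy
      have := hmSep x hx y hy hxy
      exact Metric.ball_disjoint_ball (by linarith)
    · apply Set.eq_univ_of_forall
      intro z
      obtain ⟨q, hq, hdq⟩ := hcov z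
      exact Set.mem_biUnion hq (Metric.mem_closedBall.mpr hdq)
  -- the intersection property
  have hint : ρ ∩ cube d S = ω ∩ cube d S := by
    apply Set.Subset.antisymm
    · rintro z ⟨⟨x, hx, l, hl, rfl⟩, hc⟩
      by_cases hl0 : l = 0
      · subst hl0
        rw [add_zero] at hc ⊢
        rcases hmF2 hx with h | h
        · exact ⟨h.1, hc⟩
        · exact absurd hc h.2
      · exfalso
        obtain ⟨i, hi⟩ : ∃ i, l i ≠ 0 := by
          by_contra h; push_neg at h; exact hl0 (PiLp.ext h)
        obtain ⟨k, hk⟩ := hl i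
        have hk0 : k ≠ 0 := by rintro rfl; simp at hk; exact hi hk
        have h1 : 2 * T ≤ |l i| := by
          rw [hk, abs_mul, abs_of_pos (by linarith : (0:ℝ) < 2 * T)]
          have : (1 : ℝ) ≤ |(k:ℝ)| := by
            rw [← Int.cast_abs]; exact_mod_cast Int.one_le_abs hk0
          nlinarith
        have hxi := (hmT hx) i
        have hci := hc i
        simp only [Set.mem_Icc] at hxi hci
        have hadd : (x + l) i = x i + l i := rfl
        rw [hadd] at hci
        have := abs_le.mpr hci
        have habs : |l i| ≤ |x i + l i| + |x i| := by
          have := abs_add_le (x i + l i) (-(x i))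
          simp only [abs_neg] at this
          calc |l i| = |(x i + l i) + -(x i)| := by congr 1; ring
            _ ≤ |x i + l i| + |x i| := this
        have h2 : |x i + l i| ≤ S := abs_le.mpr hci
        have h3 : |x i| ≤ T := abs_le.mpr ⟨hxi.1, hxi.2⟩
        linarith
    · intro x hx
      refine ⟨hmρ (hmF1 ⟨hx.1, cube_mono (by linarith) hx.2⟩), hx.2⟩
  -- crystallographic
  have hρcryst : IsCrystallographic ρ := by
    refine ⟨AddAction.stabilizer (EuclideanSpace ℝ (Fin d)) ρ, ?_, ?_, ?_⟩
    · ext t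
      exact AddAction.mem_stabilizer_iff
    · -- discreteness
      have hsmall : ∀ t ∈ AddAction.stabilizer (EuclideanSpace ℝ (Fin d)) ρ,
          ‖t‖ < 2 * r → t = 0 := by
        intro t ht hlt
        by_contra ht0
        obtain ⟨q, hq, _⟩ := hcov 0
        have hstab : t +ᵥ ρ = ρ := AddAction.mem_stabilizer_iff.mp ht
        have htq : t + q ∈ ρ := by
          rw [← hstab]; exact Set.vadd_mem_vadd_set hq
        have hne : t + q ≠ q := by
          intro h
          exact ht0 (by simpa using congrArg (· - q) h)
        have := hmSep _ htq _ hq hne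
        rw [dist_eq_norm, add_sub_cancel_right] at this
        linarith
      rw [discreteTopology_iff_isOpen_singleton_zero]
      have : ({0} : Set (AddAction.stabilizer (EuclideanSpace ℝ (Fin d)) ρ)) =
          (Subtype.val) ⁻¹' (Metric.ball (0 : EuclideanSpace ℝ (Fin d)) (2 * r)) := by
        ext ⟨t, ht⟩
        simp only [Set.mem_singleton_iff, Set.mem_preimage, Metric.mem_ball, dist_zero_right]
        constructor
        · rintro h0
          simp only [Subtype.ext_iff] at h0
          simp only [h0]
          simpa using by linarith
        · intro hlt
          exact Subtype.ext (hsmall t ht hlt)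
      rw [this]
      exact Metric.isOpen_ball.preimage continuous_subtype_val
    · -- cocompactness
      set P := AddAction.stabilizer (EuclideanSpace ℝ (Fin d)) ρ with hP
      have hcubeC : IsCompact (cube d T) := by
        have hclosed : IsClosed (cube d T) := by
          have : cube d T = ⋂ i, (fun x : EuclideanSpace ℝ (Fin d) => x i) ⁻¹'
              (Set.Icc (-T) T) := by
            ext x; simp [cube, Set.mem_iInter]
          rw [this]
          exact isClosed_iInter fun i =>
            isClosed_Icc.preimage (EuclideanSpace.proj (𝕜 := ℝ) i).continuous
        have hsub : cube d T ⊆ Metric.closedBall 0 (Real.sqrt d * T) := by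
          intro x hx
          rw [Metric.mem_closedBall, dist_zero_right, EuclideanSpace.norm_eq]
          have hsum : ∑ i, ‖x i‖ ^ 2 ≤ (d : ℝ) * T ^ 2 := by
            calc ∑ i, ‖x i‖ ^ 2 ≤ ∑ _i : Fin d, T ^ 2 := by
                  apply Finset.sum_le_sum
                  intro i _
                  have hxi := hx i
                  simp only [Set.mem_Icc] at hxi
                  rw [Real.norm_eq_abs, sq_abs]
                  exact sq_le_sq' hxi.1 hxi.2
              _ = (d : ℝ) * T ^ 2 := by
                  rw [Finset.sum_const, Finset.card_univ, Fintype.card_fin]; ring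
          calc Real.sqrt (∑ i, ‖x i‖ ^ 2) ≤ Real.sqrt ((d : ℝ) * T ^ 2) :=
                Real.sqrt_le_sqrt hsum
            _ = Real.sqrt d * T := by
                rw [Real.sqrt_mul (Nat.cast_nonneg d), Real.sqrt_sq hT.le]
        exact (isCompact_closedBall 0 _).of_isClosed_subset hclosed hsub
      have hLP : ∀ l ∈ latt d T, l ∈ P := fun l hl =>
        AddAction.mem_stabilizer_iff.mpr (hρvadd l hl)
      have himg : QuotientAddGroup.mk (s := P) '' cube d T = Set.univ := by
        apply Set.eq_univ_of_forall
        intro y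
        refine QuotientAddGroup.induction_on y ?_
        intro z
        obtain ⟨l, hl, hzl⟩ := hdecomp z
        refine ⟨z - l, hzl, ?_⟩
        rw [QuotientAddGroup.eq]
        have heq : -(z - l) + z = l := by abel
        rw [heq]
        exact hLP l hl
      refine ⟨?_⟩
      rw [← himg]
      exact hcubeC.image QuotientAddGroup.continuous_mk
  exact ⟨ρ, hρRR, hρcryst, hint⟩
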